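/- For the sum S of T+1 i.i.d. Poisson random variables each with mean C^γ (0<γ<1, T a fixed nonnegative integer), the limit as C→∞ of -(log P(S > C(T+1)))/(C log C) equals (1+T)(1-γ). -/

import Mathlib

open Filter Real



noncomputable def poisP (l : ℝ) (k : ℕ) : ℝ := Real.exp (-l) * l ^ k / (Nat.factorial k)

noncomputable def poissonTail (l : ℝ) (a : ℝ) : ℝ :=
  ∑' k : ℕ, if a < (k : ℝ) then poisP l k else 0

lemma poisP_pos {l : ℝ} (hl : 0 < l) (k : ℕ) : 0 < poisP l k := by
  unfold poisP
  have : (0:ℝ) < (Nat.factorial k : ℝ) := by positivity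
  positivity

lemma poisP_nonneg {l : ℝ} (hl : 0 ≤ l) (k : ℕ) : 0 ≤ poisP l k := by
  unfold poisP
  positivity

lemma summable_poisP (l : ℝ) : Summable (poisP l) := by
  have h := (Real.summable_pow_div_factorial l).mul_left (Real.exp (-l))
  refine h.congr fun k => ?_
  simp [poisP, mul_div_assoc]

lemma summable_tail (l a : ℝ) :
    Summable (fun k : ℕ => if a < (k : ℝ) then poisP l k else 0) := by
  have h := (summable_poisP l).indicator {k : ℕ | a < (k : ℝ)}
  refine h.congr fun k => ?_
  by_cases hk : a < (k : ℝ) <;> simp [Set.indicator_apply, hk]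

lemma tail_lower {l : ℝ} (hl : 0 ≤ l) {a : ℝ} {n : ℕ} (hn : a < (n : ℝ)) :
    poisP l n ≤ poissonTail l a := by
  unfold poissonTail
  have h := Summable.le_tsum (summable_tail l a) n (fun j _ => by
    by_cases hj : a < (j : ℝ) <;> simp [hj, poisP_nonneg hl])
  rwa [if_pos hn] at h

lemma pow_le_exp_mul_factorial : ∀ n : ℕ, (n : ℝ) ^ n ≤ Real.exp 1 ^ n * (Nat.factorial n) := by
  intro n
  induction n with
  | zero => simp
  | succ n ih =>
    have step : ((n : ℝ) + 1) ^ n ≤ Real.exp 1 * (n : ℝ) ^ n := by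
      rcases Nat.eq_zero_or_pos n with h0 | hpos
      · subst h0
        simpa using Real.one_le_exp zero_le_one
      · have hn : (0:ℝ) < n := by exact_mod_cast hpos
        have h1 : (n : ℝ) + 1 = (n : ℝ) * (1 + 1 / n) := by field_simp
        have h2 : (1 + 1 / (n:ℝ)) ≤ Real.exp (1 / n) := by
          simpa [add_comm] using Real.add_one_le_exp (1 / (n:ℝ))
        have h3 : (1 + 1 / (n:ℝ)) ^ n ≤ Real.exp (1 / n) ^ n := by
          apply pow_le_pow_left₀ (by positivity) h2
        have h4 : Real.exp (1 / (n:ℝ)) ^ n = Real.exp 1 := by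
          rw [← Real.exp_nat_mul]
          congr 1
          field_simp
        calc ((n : ℝ) + 1) ^ n = (n : ℝ) ^ n * (1 + 1 / n) ^ n := by
              rw [h1, mul_pow]
          _ ≤ (n : ℝ) ^ n * Real.exp 1 := by
              apply mul_le_mul_of_nonneg_left (h4 ▸ h3) (by positivity)
          _ = Real.exp 1 * (n : ℝ) ^ n := by ring
    have hfac : (Nat.factorial (n+1) : ℝ) = ((n:ℝ)+1) * (Nat.factorial n) := by
      push_cast [Nat.factorial_succ]; ring
    push_cast
    calc ((n:ℝ) + 1) ^ (n+1) = ((n:ℝ)+1) ^ n * ((n:ℝ)+1) := by ring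
      _ ≤ (Real.exp 1 * (n : ℝ) ^ n) * ((n:ℝ)+1) := by
          apply mul_le_mul_of_nonneg_right step (by positivity)
      _ ≤ (Real.exp 1 * (Real.exp 1 ^ n * (Nat.factorial n))) * ((n:ℝ)+1) := by
          apply mul_le_mul_of_nonneg_right (mul_le_mul_of_nonneg_left ih (le_of_lt (Real.exp_pos 1))) (by positivity)
      _ = Real.exp 1 ^ (n+1) * (Nat.factorial (n+1)) := by rw [hfac]; ring

lemma log_factorial_le (n : ℕ) : Real.log (Nat.factorial n) ≤ n * Real.log n := by
  have h : (Nat.factorial n : ℝ) ≤ (n : ℝ) ^ n := by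
    exact_mod_cast Nat.factorial_le_pow n
  have h2 : Real.log (Nat.factorial n) ≤ Real.log ((n:ℝ) ^ n) := by
    apply Real.log_le_log (by exact_mod_cast Nat.factorial_pos n) h
  simpa [Real.log_pow] using h2

lemma le_log_factorial (n : ℕ) :
    n * Real.log n - n ≤ Real.log (Nat.factorial n) := by
  have h := pow_le_exp_mul_factorial n
  rcases Nat.eq_zero_or_pos n with h0 | hpos
  · subst h0; simp
  have hn : (0:ℝ) < n := by exact_mod_cast hpos
  have hlog : Real.log ((n:ℝ) ^ n) ≤ Real.log (Real.exp 1 ^ n * (Nat.factorial n)) :=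
    Real.log_le_log (by positivity) h
  rw [Real.log_pow, Real.log_mul (by positivity) (by exact_mod_cast (Nat.factorial_pos n).ne'),
    Real.log_pow, Real.log_exp] at hlog
  linarith





lemma poisP_succ_le {l : ℝ} (hl : 0 < l) (n j : ℕ) (h2l : 2 * l ≤ (n : ℝ) + 1) :
    poisP l (j + n) ≤ poisP l n * (1 / 2) ^ j := by
  have hfac : ((Nat.factorial n : ℝ) * ((n : ℝ) + 1) ^ j) ≤ (Nat.factorial (n + j) : ℝ) := by
    have := @Nat.factorial_mul_pow_le_factorial n j
    exact_mod_cast this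
  have hnum : (0:ℝ) ≤ Real.exp (-l) * l ^ (n + j) := by positivity
  have hden : (0:ℝ) < (Nat.factorial n : ℝ) * ((n : ℝ) + 1) ^ j := by positivity
  have step1 : poisP l (j + n) ≤ Real.exp (-l) * l ^ (n + j) /
      ((Nat.factorial n : ℝ) * ((n : ℝ) + 1) ^ j) := by
    rw [poisP, add_comm j n]
    exact div_le_div_of_nonneg_left hnum hden hfac
  have step2 : Real.exp (-l) * l ^ (n + j) / ((Nat.factorial n : ℝ) * ((n : ℝ) + 1) ^ j)
      = poisP l n * (l / ((n : ℝ) + 1)) ^ j := by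
    rw [poisP, div_pow, pow_add]
    have h1 : ((n:ℝ) + 1) ^ j ≠ 0 := by positivity
    have h2 : (Nat.factorial n : ℝ) ≠ 0 := by positivity
    field_simp
  have step3 : (l / ((n : ℝ) + 1)) ^ j ≤ (1 / 2 : ℝ) ^ j := by
    apply pow_le_pow_left₀ (by positivity)
    rw [div_le_div_iff₀ (by positivity) (by norm_num)]
    linarith
  calc poisP l (j + n) ≤ poisP l n * (l / ((n : ℝ) + 1)) ^ j := step2 ▸ step1
    _ ≤ poisP l n * (1 / 2) ^ j := by
        apply mul_le_mul_of_nonneg_left step3 (poisP_nonneg hl.le n)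

lemma tail_upper {l : ℝ} (hl : 0 < l) (m : ℕ) (h2l : 2 * l ≤ (m : ℝ) + 2) :
    poissonTail l m ≤ 2 * poisP l (m + 1) := by
  set n := m + 1 with hn
  have hs := summable_tail l (m : ℝ)
  have hsum := Summable.sum_add_tsum_nat_add (f := fun k : ℕ => if (m:ℝ) < (k : ℝ) then poisP l k else 0) n hs
  have hrange : (∑ i ∈ Finset.range n, if (m:ℝ) < (i : ℝ) then poisP l i else 0) = 0 := by
    apply Finset.sum_eq_zero
    intro i hi
    rw [Finset.mem_range, hn] at hi
    have : (i : ℝ) ≤ (m : ℝ) := by exact_mod_cast Nat.lt_succ_iff.mp hi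
    rw [if_neg (not_lt.mpr this)]
  have htail : poissonTail l m = ∑' j : ℕ, poisP l (j + n) := by
    rw [poissonTail, ← hsum, hrange, zero_add]
    apply tsum_congr
    intro j
    have h : (m : ℝ) < ((j + n : ℕ) : ℝ) := by
      push_cast [hn]; linarith [Nat.cast_nonneg (α := ℝ) j]
    show (if (m:ℝ) < ((j + n : ℕ) : ℝ) then poisP l (j+n) else 0) = poisP l (j + n)
    rw [if_pos h]
  have h2l' : 2 * l ≤ (n : ℝ) + 1 := by push_cast [hn]; linarith
  have hterm : ∀ j : ℕ, poisP l (j + n) ≤ poisP l n * (1 / 2) ^ j :=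
    fun j => poisP_succ_le hl n j h2l'
  have hsl : Summable (fun j : ℕ => poisP l (j + n)) := by
    have hss : Summable (fun j : ℕ => (if (m:ℝ) < ((j + n : ℕ) : ℝ) then poisP l (j+n) else 0)) :=
      (summable_nat_add_iff (f := fun k : ℕ => if (m:ℝ) < (k : ℝ) then poisP l k else 0) n).mpr hs
    refine hss.congr fun j => ?_
    have h : (m : ℝ) < ((j + n : ℕ) : ℝ) := by
      push_cast [hn]; linarith [Nat.cast_nonneg (α := ℝ) j]
    rw [if_pos h]
  have hsr : Summable (fun j : ℕ => poisP l n * (1 / 2 : ℝ) ^ j) :=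
    (summable_geometric_of_lt_one (by norm_num) (by norm_num)).mul_left _
  have hle := Summable.tsum_le_tsum hterm hsl hsr
  rw [htail]
  refine hle.trans ?_
  rw [tsum_mul_left, tsum_geometric_of_lt_one (by norm_num) (by norm_num)]
  norm_num [mul_comm]


lemma hlogC : Tendsto (fun C : ℕ => Real.log C) atTop atTop :=
  Real.tendsto_log_atTop.comp tendsto_natCast_atTop_atTop

lemma hClogC : Tendsto (fun C : ℕ => (C : ℝ) * Real.log C) atTop atTop :=
  tendsto_natCast_atTop_atTop.atTop_mul_atTop₀ hlogC

-- t1 numerator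
lemma t1num (A γ : ℝ) (hγ1 : γ < 1) :
    Tendsto (fun C : ℕ => A * (C : ℝ) ^ γ / C) atTop (nhds 0) := by
  have h0 : Tendsto (fun C : ℕ => (C : ℝ) ^ (γ - 1)) atTop (nhds 0) := by
    have := (tendsto_rpow_neg_atTop (by linarith : (0:ℝ) < 1 - γ)).comp
      (tendsto_natCast_atTop_atTop (R := ℝ))
    simpa [Function.comp_def, neg_sub] using this
  have h1 : Tendsto (fun C : ℕ => A * (C : ℝ) ^ (γ - 1)) atTop (nhds 0) := by
    simpa using h0.const_mul A
  refine h1.congr' ?_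
  filter_upwards [eventually_ge_atTop 1] with C hC
  have hC0 : (0:ℝ) < C := by exact_mod_cast hC
  rw [Real.rpow_sub hC0, Real.rpow_one, mul_div_assoc]

lemma t2lim (T : ℕ) :
    Tendsto (fun C : ℕ => ((C * (T + 1) + 1 : ℕ) : ℝ) / C) atTop (nhds ((T : ℝ) + 1)) := by
  have h : Tendsto (fun C : ℕ => ((T : ℝ) + 1) + 1 / C) atTop (nhds (((T : ℝ) + 1) + 0)) :=
    tendsto_const_nhds.add tendsto_one_div_atTop_nhds_zero_nat
  rw [add_zero] at h
  refine h.congr' ?_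
  filter_upwards [eventually_ge_atTop 1] with C hC
  have hC0 : (C:ℝ) ≠ 0 := by positivity
  push_cast
  field_simp

lemma t3lim (A γ : ℝ) (hA : 0 < A) :
    Tendsto (fun C : ℕ => Real.log (A * (C : ℝ) ^ γ) / Real.log C) atTop (nhds γ) := by
  have h : Tendsto (fun C : ℕ => Real.log A / Real.log C + γ) atTop (nhds (0 + γ)) :=
    (Tendsto.div_atTop tendsto_const_nhds hlogC).add tendsto_const_nhds
  rw [zero_add] at h
  refine h.congr' ?_
  filter_upwards [eventually_ge_atTop 2] with C hC
  have hC0 : (0:ℝ) < C := by positivity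
  have hlC : Real.log C ≠ 0 := by
    have : (1:ℝ) < C := by exact_mod_cast Nat.lt_of_lt_of_le Nat.one_lt_two hC
    exact (Real.log_pos this).ne'
  rw [Real.log_mul hA.ne' (Real.rpow_pos_of_pos hC0 γ).ne', Real.log_rpow hC0, add_div,
    mul_div_assoc, div_self hlC, mul_one]

lemma t4lim (T : ℕ) :
    Tendsto (fun C : ℕ => Real.log ((C * (T + 1) + 1 : ℕ) : ℝ) / Real.log C) atTop (nhds 1) := by
  have hA : (0:ℝ) < (T : ℝ) + 1 := by positivity
  have hin : Tendsto (fun C : ℕ => ((T : ℝ) + 1) + 1 / C) atTop (nhds (((T : ℝ) + 1) + 0)) :=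
    tendsto_const_nhds.add tendsto_one_div_atTop_nhds_zero_nat
  rw [add_zero] at hin
  have hlog2 : Tendsto (fun C : ℕ => Real.log (((T : ℝ) + 1) + 1 / C)) atTop
      (nhds (Real.log ((T : ℝ) + 1))) :=
    ((Real.continuousAt_log hA.ne').tendsto).comp hin
  have h : Tendsto (fun C : ℕ => 1 + Real.log (((T : ℝ) + 1) + 1 / C) / Real.log C) atTop
      (nhds (1 + 0)) :=
    tendsto_const_nhds.add (Tendsto.div_atTop hlog2 hlogC)
  rw [add_zero] at h
  refine h.congr' ?_
  filter_upwards [eventually_ge_atTop 2] with C hC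
  have hC0 : (0:ℝ) < C := by positivity
  have h1C : (0:ℝ) < ((T : ℝ) + 1) + 1 / C := by positivity
  have hlC : Real.log C ≠ 0 := by
    have : (1:ℝ) < C := by exact_mod_cast Nat.lt_of_lt_of_le Nat.one_lt_two hC
    exact (Real.log_pos this).ne'
  have hcast : ((C * (T + 1) + 1 : ℕ) : ℝ) = (C : ℝ) * (((T : ℝ) + 1) + 1 / C) := by
    push_cast
    field_simp
  rw [hcast, Real.log_mul hC0.ne' h1C.ne', add_div, div_self hlC]














/-- For the sum `S` of `T+1` i.i.d. Poisson random variables each with mean `C^γ`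
(equivalently, `S` Poisson with mean `(T+1)C^γ`), the limit as `C → ∞` of
`-(log P(S > C(T+1)))/(C log C)` equals `(1+T)(1-γ)`. -/
theorem poisson_polynomial_prediction_diversity (γ : ℝ) (hγ0 : 0 < γ) (hγ1 : γ < 1) (T : ℕ) :
    Tendsto (fun C : ℕ =>
        -(Real.log (poissonTail (((T : ℝ) + 1) * (C : ℝ) ^ γ) ((C : ℝ) * ((T : ℝ) + 1)))) /
          ((C : ℝ) * Real.log C))
      atTop (nhds ((1 + (T : ℝ)) * (1 - γ))) := by
  set A : ℝ := (T : ℝ) + 1 with hAdef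
  have hA : 0 < A := by positivity
  set Λ : ℕ → ℝ := fun C => A * (C : ℝ) ^ γ with hΛdef
  set N : ℕ → ℝ := fun C => ((C * (T + 1) + 1 : ℕ) : ℝ) with hNdef
  -- the bounding sequences
  set U : ℕ → ℝ := fun C =>
    (Λ C - N C * Real.log (Λ C) + N C * Real.log (N C)) / ((C : ℝ) * Real.log C) with hUdef
  set L : ℕ → ℝ := fun C =>
    (Λ C - N C * Real.log (Λ C) + N C * Real.log (N C) - N C - Real.log 2) /
      ((C : ℝ) * Real.log C) with hLdef
  -- limit of U
  have hU : Tendsto U atTop (nhds ((1 + (T : ℝ)) * (1 - γ))) := by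
    have t1 : Tendsto (fun C : ℕ => (Λ C / (C : ℝ)) / Real.log C) atTop (nhds 0) :=
      Tendsto.div_atTop (t1num A γ hγ1) hlogC
    have t2 : Tendsto (fun C : ℕ => N C / (C : ℝ)) atTop (nhds A) := t2lim T
    have t3 : Tendsto (fun C : ℕ => Real.log (Λ C) / Real.log C) atTop (nhds γ) :=
      t3lim A γ hA
    have t4 : Tendsto (fun C : ℕ => Real.log (N C) / Real.log C) atTop (nhds 1) := t4lim T
    have h := (t1.sub (t2.mul t3)).add (t2.mul t4)
    have hval : (0 - A * γ + A * 1) = (1 + (T : ℝ)) * (1 - γ) := by rw [hAdef]; ring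
    rw [hval] at h
    have key : ∀ (x y z w c d : ℝ),
        (x - y * z + y * w) / (c * d) = x / c / d - y / c * (z / d) + y / c * (w / d) := by
      intros x y z w c d
      rw [add_div, sub_div, div_div, mul_div_mul_comm, mul_div_mul_comm]
    refine h.congr fun C => ?_
    exact (key (Λ C) (N C) (Real.log (Λ C)) (Real.log (N C)) C (Real.log C)).symm
  -- auxiliary vanishing terms
  have hN0 : Tendsto (fun C : ℕ => N C / ((C : ℝ) * Real.log C)) atTop (nhds 0) := by
    have := Tendsto.div_atTop (t2lim T) hlogC
    refine this.congr fun C => ?_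
    rw [div_div]
  have hlog2 : Tendsto (fun C : ℕ => Real.log 2 / ((C : ℝ) * Real.log C)) atTop (nhds 0) :=
    Tendsto.div_atTop tendsto_const_nhds hClogC
  -- limit of L
  have hL : Tendsto L atTop (nhds ((1 + (T : ℝ)) * (1 - γ))) := by
    have h := (hU.sub hN0).sub hlog2
    rw [sub_zero, sub_zero] at h
    refine h.congr fun C => ?_
    show U C - _ - _ = L C
    rw [hLdef, hUdef]
    simp only
    rw [sub_div, sub_div]
  -- eventual bound 2 * Λ C ≤ C * (T+1) + 2
  have hev2 : ∀ᶠ C : ℕ in atTop, 2 * Λ C ≤ (C : ℝ) * ((T : ℝ) + 1) + 2 := by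
    have h0 : Tendsto (fun C : ℕ => 2 * A * (C : ℝ) ^ (γ - 1)) atTop (nhds 0) := by
      have := (tendsto_rpow_neg_atTop (by linarith : (0:ℝ) < 1 - γ)).comp
        (tendsto_natCast_atTop_atTop (R := ℝ))
      have h0' : Tendsto (fun C : ℕ => (C : ℝ) ^ (γ - 1)) atTop (nhds 0) := by
        simpa [Function.comp_def, neg_sub] using this
      simpa using h0'.const_mul (2 * A)
    have hev := h0.eventually_lt_const hA
    filter_upwards [hev, eventually_ge_atTop 1] with C hC h1
    have hC0 : (0:ℝ) < C := by exact_mod_cast h1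
    have hpow : (C : ℝ) ^ (γ - 1) * C = (C : ℝ) ^ γ := by
      rw [Real.rpow_sub hC0, Real.rpow_one, div_mul_cancel₀]
      exact hC0.ne'
    have : (2 * A * (C : ℝ) ^ (γ - 1)) * C ≤ A * C := by
      apply mul_le_mul_of_nonneg_right hC.le hC0.le
    show 2 * (A * (C : ℝ) ^ γ) ≤ (C : ℝ) * ((T : ℝ) + 1) + 2
    nlinarith [Real.rpow_pos_of_pos hC0 γ]
  -- squeeze
  refine tendsto_of_tendsto_of_tendsto_of_le_of_le' hL hU ?_ ?_
  · -- L ≤ f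
    filter_upwards [eventually_ge_atTop 2, hev2] with C hC2 h2l
    have hC0 : (0:ℝ) < C := by
      have : (2:ℝ) ≤ C := by exact_mod_cast hC2
      linarith
    have hlC : 0 < Real.log C := Real.log_pos (by exact_mod_cast hC2)
    have hden : 0 < (C : ℝ) * Real.log C := by positivity
    have hl : 0 < Λ C := by rw [hΛdef]; positivity
    set n : ℕ := C * (T + 1) + 1 with hndef
    set m : ℕ := C * (T + 1) with hmdef
    have hm : (m : ℝ) = (C : ℝ) * ((T : ℝ) + 1) := by rw [hmdef]; push_cast; ring
    have hmn : (m : ℝ) < (n : ℝ) := by rw [hndef, hmdef]; push_cast; linarith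
    have h1 : poisP (Λ C) n ≤ poissonTail (Λ C) ((C : ℝ) * ((T : ℝ) + 1)) := by
      rw [← hm]; exact tail_lower hl.le hmn
    have h2 : poissonTail (Λ C) ((C : ℝ) * ((T : ℝ) + 1)) ≤ 2 * poisP (Λ C) n := by
      rw [← hm]
      exact tail_upper hl m (by rw [hm]; linarith)
    have hppos : 0 < poisP (Λ C) n := poisP_pos hl n
    have htpos : 0 < poissonTail (Λ C) ((C : ℝ) * ((T : ℝ) + 1)) := lt_of_lt_of_le hppos h1
    have hlogp : Real.log (poisP (Λ C) n) =
        -(Λ C) + (n : ℝ) * Real.log (Λ C) - Real.log (Nat.factorial n) := by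
      rw [poisP, Real.log_div (by positivity) (by positivity), Real.log_mul
        (Real.exp_ne_zero _) (pow_ne_zero _ hl.ne'), Real.log_exp, Real.log_pow]
    have hlogt : Real.log (poissonTail (Λ C) ((C : ℝ) * ((T : ℝ) + 1))) ≤
        Real.log 2 + Real.log (poisP (Λ C) n) := by
      have := Real.log_le_log htpos h2
      rwa [Real.log_mul (by norm_num) hppos.ne'] at this
    have hN : N C = (n : ℝ) := by rw [hNdef, hndef]
    have hnum : Λ C - N C * Real.log (Λ C) + N C * Real.log (N C) - N C - Real.log 2 ≤
        -Real.log (poissonTail (Λ C) ((C : ℝ) * ((T : ℝ) + 1))) := by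
      rw [hN]
      have hlf := le_log_factorial n
      linarith
    exact div_le_div_of_nonneg_right hnum hden.le
  · -- f ≤ U
    filter_upwards [eventually_ge_atTop 2] with C hC2
    have hC0 : (0:ℝ) < C := by
      have : (2:ℝ) ≤ C := by exact_mod_cast hC2
      linarith
    have hlC : 0 < Real.log C := Real.log_pos (by exact_mod_cast hC2)
    have hden : 0 < (C : ℝ) * Real.log C := by positivity
    have hl : 0 < Λ C := by rw [hΛdef]; positivity
    set n : ℕ := C * (T + 1) + 1 with hndef
    set m : ℕ := C * (T + 1) with hmdef
    have hm : (m : ℝ) = (C : ℝ) * ((T : ℝ) + 1) := by rw [hmdef]; push_cast; ring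
    have hmn : (m : ℝ) < (n : ℝ) := by rw [hndef, hmdef]; push_cast; linarith
    have h1 : poisP (Λ C) n ≤ poissonTail (Λ C) ((C : ℝ) * ((T : ℝ) + 1)) := by
      rw [← hm]; exact tail_lower hl.le hmn
    have hppos : 0 < poisP (Λ C) n := poisP_pos hl n
    have hlogp : Real.log (poisP (Λ C) n) =
        -(Λ C) + (n : ℝ) * Real.log (Λ C) - Real.log (Nat.factorial n) := by
      rw [poisP, Real.log_div (by positivity) (by positivity), Real.log_mul
        (Real.exp_ne_zero _) (pow_ne_zero _ hl.ne'), Real.log_exp, Real.log_pow]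
    have hlogt : Real.log (poisP (Λ C) n) ≤
        Real.log (poissonTail (Λ C) ((C : ℝ) * ((T : ℝ) + 1))) :=
      Real.log_le_log hppos h1
    have hN : N C = (n : ℝ) := by rw [hNdef, hndef]
    have hnum : -Real.log (poissonTail (Λ C) ((C : ℝ) * ((T : ℝ) + 1))) ≤
        Λ C - N C * Real.log (Λ C) + N C * Real.log (N C) := by
      rw [hN]
      have hlf := log_factorial_le n
      linarith
    exact div_le_div_of_nonneg_right hnum hden.le
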